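/- A right regulated mapping g : [a,b] → E from a compact real interval to a Banach space is Riemann integrable if and only if it is bounded. -/

import Mathlib

open Set MeasureTheory Metric Filter

/-- Riemann integrability of a Banach-valued map on `[a,b]`, via Riemann sums of
tagged partitions with uniform mesh. -/
def RiemannIntegrableOn {E : Type*} [NormedAddCommGroup E] [NormedSpace ℝ E]
    (g : ℝ → E) (a b : ℝ) : Prop :=
  ∃ I : E, ∀ ε > (0 : ℝ), ∃ δ > (0 : ℝ), ∀ m : ℕ, ∀ t ξ : ℕ → ℝ,
    t 0 = a → t m = b → (∀ i < m, t i < t (i + 1)) →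
    (∀ i < m, ξ i ∈ Set.Icc (t i) (t (i + 1))) →
    (∀ i < m, t (i + 1) - t i < δ) →
    ‖(∑ i ∈ Finset.range m, (t (i + 1) - t i) • g (ξ i)) - I‖ < ε

/-- A set of reals each of whose points has a gap immediately to the right is countable. -/
lemma countable_of_right_gap {S : Set ℝ}
    (h : ∀ x ∈ S, ∃ η > 0, ∀ y ∈ S, y ∉ Set.Ioo x (x + η)) : S.Countable := by
  choose η hη hgap using h
  have hex : ∀ x : S, ∃ q : ℚ, (x : ℝ) < q ∧ (q : ℝ) < x + η x x.2 := fun x =>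
    exists_rat_btwn (by linarith [hη x x.2])
  choose q hq1 hq2 using hex
  have key : ∀ x y : S, (x : ℝ) < y → q x ≠ q y := by
    intro x y hxy hq
    refine hgap x x.2 y y.2 ⟨hxy, ?_⟩
    have hcast : ((q y : ℚ) : ℝ) = ((q x : ℚ) : ℝ) := by exact_mod_cast hq.symm
    calc (y : ℝ) < q y := hq1 y
      _ = q x := hcast
      _ < x + η x x.2 := hq2 x
  have hinj : Function.Injective q := by
    intro x y hxy
    rcases lt_trichotomy (x : ℝ) (y : ℝ) with h1 | h1 | h1
    · exact absurd hxy (key x y h1)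
    · exact Subtype.ext h1
    · exact absurd hxy.symm (key y x h1)
  rw [← Set.countable_coe_iff]
  exact hinj.countable

/-- Points of `[a,b]` where the oscillation of `g` relative to `[a,b]` exceeds `ε`. -/
def BadSet {E : Type*} [NormedAddCommGroup E] (g : ℝ → E) (a b ε : ℝ) : Set ℝ :=
  {x | x ∈ Set.Icc a b ∧ ∀ r > (0:ℝ), ∃ u ∈ Metric.ball x r ∩ Set.Icc a b,
      ∃ v ∈ Metric.ball x r ∩ Set.Icc a b, ε < ‖g u - g v‖}

lemma badSet_countable {E : Type*} [NormedAddCommGroup E] {g : ℝ → E} {a b ε : ℝ}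
    (hg : ∀ x ∈ Set.Ico a b, ∃ L : E,
      Filter.Tendsto g (nhdsWithin x (Set.Ioi x)) (nhds L))
    (hε : 0 < ε) : (BadSet g a b ε).Countable := by
  apply countable_of_right_gap
  rintro x ⟨hxI, -⟩
  rcases eq_or_lt_of_le hxI.2 with hb | hb
  · exact ⟨1, one_pos, fun y hy hy2 => by
      have h1 : y ≤ b := hy.1.2
      have h2 : x < y := hy2.1
      linarith⟩
  · obtain ⟨L, hL⟩ := hg x ⟨hxI.1, hb⟩
    obtain ⟨δ, hδ, hclose⟩ := Metric.tendsto_nhdsWithin_nhds.mp hL (ε/3) (by linarith)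
    refine ⟨δ/2, by linarith, fun y hy hy2 => ?_⟩
    obtain ⟨-, hbad⟩ := hy
    have hyx : x < y := hy2.1
    have hyδ : y < x + δ/2 := hy2.2
    set r : ℝ := min (y - x) (x + δ - y) with hr
    have hr1 : r ≤ y - x := min_le_left _ _
    have hr2 : r ≤ x + δ - y := min_le_right _ _
    have hr0 : 0 < r := lt_min (by linarith) (by linarith)
    obtain ⟨u, hu, v, hv, huv⟩ := hbad r hr0
    have hball : ∀ z, z ∈ Metric.ball y r → z ∈ Set.Ioi x ∧ dist z x < δ := by
      intro z hz
      rw [Metric.mem_ball, Real.dist_eq, abs_lt] at hz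
      obtain ⟨hz1, hz2⟩ := hz
      constructor
      · show x < z; linarith
      · rw [Real.dist_eq, abs_lt]; constructor <;> linarith
    have hu' := hball u hu.1
    have hv' := hball v hv.1
    have h1 : dist (g u) L < ε/3 := hclose hu'.1 hu'.2
    have h2 : dist (g v) L < ε/3 := hclose hv'.1 hv'.2
    have : ‖g u - g v‖ < ε := by
      have := dist_triangle (g u) L (g v)
      rw [dist_comm L (g v)] at this
      have hd : dist (g u) (g v) < ε := by linarith
      rwa [dist_eq_norm] at hd
    linarith

lemma good_of_not_bad {E : Type*} [NormedAddCommGroup E]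
    {g : ℝ → E} {a b ε x : ℝ} (hx : x ∈ Set.Icc a b)
    (h : x ∉ BadSet g a b ε) :
    ∃ r > (0:ℝ), ∀ u ∈ Metric.ball x r ∩ Set.Icc a b,
      ∀ v ∈ Metric.ball x r ∩ Set.Icc a b, ‖g u - g v‖ ≤ ε := by
  rw [BadSet, Set.mem_setOf_eq] at h
  push_neg at h
  exact h hx

lemma exists_countable_continuousOn {E : Type*} [NormedAddCommGroup E]
    {g : ℝ → E} {a b : ℝ}
    (hg : ∀ x ∈ Set.Ico a b, ∃ L : E,
      Filter.Tendsto g (nhdsWithin x (Set.Ioi x)) (nhds L)) :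
    ∃ D : Set ℝ, D.Countable ∧ ContinuousOn g (Set.Icc a b \ D) := by
  refine ⟨⋃ n : ℕ, BadSet g a b (1/(n+1)), Set.countable_iUnion fun n =>
    badSet_countable hg (by positivity), ?_⟩
  intro x hx
  obtain ⟨hxI, hxD⟩ := hx
  rw [Metric.continuousWithinAt_iff]
  intro ε hε
  obtain ⟨n, hn⟩ := exists_nat_one_div_lt hε
  have hxn : x ∉ BadSet g a b (1/(n+1)) := fun hc => hxD (Set.mem_iUnion.mpr ⟨n, hc⟩)
  obtain ⟨r, hr0, hr⟩ := good_of_not_bad hxI hxn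
  refine ⟨r, hr0, fun {y} hy hyx => ?_⟩
  have : ‖g y - g x‖ ≤ 1/(n+1) :=
    hr y ⟨Metric.mem_ball.mpr hyx, hy.1⟩ x ⟨Metric.mem_ball_self hr0, hxI⟩
  rw [dist_eq_norm]
  calc ‖g y - g x‖ ≤ 1/(n+1) := this
    _ < ε := by exact_mod_cast hn

lemma integrableOn_of_bounded {E : Type*} [NormedAddCommGroup E]
    {g : ℝ → E} {a b M : ℝ}
    (hg : ∀ x ∈ Set.Ico a b, ∃ L : E,
      Filter.Tendsto g (nhdsWithin x (Set.Ioi x)) (nhds L))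
    (hM : ∀ t ∈ Set.Icc a b, ‖g t‖ ≤ M) :
    IntegrableOn g (Set.Icc a b) volume := by
  obtain ⟨D, hDc, hcont⟩ := exists_countable_continuousOn (E := E) (g := g) hg
  have hDmeas : MeasurableSet (Set.Icc a b \ D) :=
    measurableSet_Icc.diff hDc.measurableSet
  have haesm : AEStronglyMeasurable g (volume.restrict (Set.Icc a b \ D)) :=
    hcont.aestronglyMeasurable hDmeas
  have hres : volume.restrict (Set.Icc a b \ D) = volume.restrict (Set.Icc a b) := by
    apply Measure.restrict_congr_set
    have hD0 : volume D = 0 := hDc.measure_zero _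
    have : volume (Set.Icc a b ∩ D) = 0 :=
      measure_mono_null Set.inter_subset_right hD0
    exact (MeasureTheory.diff_ae_eq_self (s := Set.Icc a b) (t := D)).mpr this
  rw [hres] at haesm
  haveI : IsFiniteMeasure (volume.restrict (Set.Icc a b)) := ⟨by
    rw [Measure.restrict_apply_univ]; exact measure_Icc_lt_top⟩
  refine Integrable.mono' (integrable_const M) haesm ?_
  exact (ae_restrict_iff' measurableSet_Icc).mpr (Filter.Eventually.of_forall hM)

lemma intervalIntegrable_of_bounded {E : Type*} [NormedAddCommGroup E]
    {g : ℝ → E} {a b M : ℝ} (hab : a ≤ b)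
    (hg : ∀ x ∈ Set.Ico a b, ∃ L : E,
      Filter.Tendsto g (nhdsWithin x (Set.Ioi x)) (nhds L))
    (hM : ∀ t ∈ Set.Icc a b, ‖g t‖ ≤ M) :
    IntervalIntegrable g volume a b := by
  have := integrableOn_of_bounded hg hM
  rw [← Set.uIcc_of_le hab] at this
  exact this.intervalIntegrable

lemma part_mono {t : ℕ → ℝ} {m : ℕ} (ht : ∀ i < m, t i < t (i + 1)) :
    ∀ i j, i ≤ j → j ≤ m → t i ≤ t j := by
  intro i j hij hjm
  induction j with
  | zero => simp [Nat.le_zero.mp hij]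
  | succ k ih =>
    rcases Nat.lt_or_ge i (k + 1) with h | h
    · exact le_trans (ih (Nat.lt_succ_iff.mp h) (le_trans (Nat.le_succ k) hjm))
        (le_of_lt (ht k (by omega)))
    · have : i = k + 1 := le_antisymm hij h
      simp [this]

lemma part_cover {t : ℕ → ℝ} :
    ∀ {m : ℕ}, (∀ i < m, t i < t (i + 1)) → 0 < m →
      ∀ x ∈ Set.Icc (t 0) (t m), ∃ i < m, x ∈ Set.Icc (t i) (t (i + 1)) := by
  intro m
  induction m with
  | zero => intro _ h; exact absurd h (lt_irrefl 0)
  | succ k ih =>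
    intro ht _ x hx
    rcases Nat.eq_zero_or_pos k with hk | hk
    · subst hk; exact ⟨0, Nat.zero_lt_one, hx⟩
    · rcases le_or_gt x (t k) with h | h
      · obtain ⟨i, hi, hxi⟩ := ih (fun i hi => ht i (by omega)) hk x ⟨hx.1, h⟩
        exact ⟨i, by omega, hxi⟩
      · exact ⟨k, Nat.lt_succ_self k, ⟨le_of_lt h, hx.2⟩⟩

lemma bounded_of_riemann {E : Type*} [NormedAddCommGroup E] [NormedSpace ℝ E]
    {g : ℝ → E} {a b : ℝ} (hab : a < b) {I : E}
    (hI : ∀ ε > (0 : ℝ), ∃ δ > (0 : ℝ), ∀ m : ℕ, ∀ t ξ : ℕ → ℝ,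
      t 0 = a → t m = b → (∀ i < m, t i < t (i + 1)) →
      (∀ i < m, ξ i ∈ Set.Icc (t i) (t (i + 1))) →
      (∀ i < m, t (i + 1) - t i < δ) →
      ‖(∑ i ∈ Finset.range m, (t (i + 1) - t i) • g (ξ i)) - I‖ < ε) :
    ∃ M : ℝ, ∀ t ∈ Set.Icc a b, ‖g t‖ ≤ M := by
  by_contra hub
  push_neg at hub
  obtain ⟨δ, hδ, hpart⟩ := hI 1 one_pos
  obtain ⟨n, hn⟩ := exists_nat_gt ((b - a) / δ)
  have hn0 : 0 < n := by
    by_contra h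
    have : n = 0 := by omega
    subst this
    simp at hn
    nlinarith [div_pos (by linarith : (0:ℝ) < b - a) hδ]
  have hnR : (0:ℝ) < n := by exact_mod_cast hn0
  set Δ : ℝ := (b - a) / n with hΔdef
  have hΔ0 : 0 < Δ := div_pos (by linarith) hnR
  have hΔδ : Δ < δ := by
    rw [hΔdef, div_lt_iff₀ hnR]
    calc b - a = ((b - a)/δ) * δ := by field_simp
      _ < n * δ := by exact mul_lt_mul_of_pos_right hn hδ
      _ = δ * n := mul_comm _ _
  set t : ℕ → ℝ := fun i => a + i * Δ with htdef
  have ht0 : t 0 = a := by simp [htdef]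
  have htn : t n = b := by
    simp only [htdef, hΔdef]
    field_simp
    ring
  have htd : ∀ i : ℕ, t (i + 1) - t i = Δ := by
    intro i; simp only [htdef]; push_cast; ring
  have htinc : ∀ i < n, t i < t (i + 1) := fun i _ => by
    have := htd i; linarith
  have hmesh : ∀ i < n, t (i + 1) - t i < δ := fun i _ => by rw [htd i]; exact hΔδ
  have hpiece : ∃ i < n, ∀ M : ℝ, ∃ x ∈ Set.Icc (t i) (t (i + 1)), M < ‖g x‖ := by
    by_contra hc
    push_neg at hc
    choose M hM using hc
    set f : ℕ → ℝ := fun i => if h : i < n then M i h else 0 with hfdef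
    set B : ℝ := (Finset.range n).sup' (Finset.nonempty_range_iff.mpr (by omega)) f
      with hBdef
    obtain ⟨x, hx, hBx⟩ := hub B
    rw [← ht0, ← htn] at hx
    obtain ⟨i, hi, hxi⟩ := part_cover htinc hn0 x hx
    have h1 : ‖g x‖ ≤ f i := by
      have := hM i hi x hxi
      simpa [hfdef, hi] using this
    have h2 : f i ≤ B := Finset.le_sup' f (Finset.mem_range.mpr hi)
    linarith
  obtain ⟨i, hi, hbig⟩ := hpiece
  classical
  set ξ0 : ℕ → ℝ := fun j => t j with hξ0
  have hξ0v : ∀ j < n, ξ0 j ∈ Set.Icc (t j) (t (j + 1)) :=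
    fun j hj => ⟨le_refl _, le_of_lt (htinc j hj)⟩
  obtain ⟨z, hz, hzn⟩ := hbig (‖g (t i)‖ + 3 / Δ)
  set ξ1 : ℕ → ℝ := Function.update ξ0 i z with hξ1
  have hξ1v : ∀ j < n, ξ1 j ∈ Set.Icc (t j) (t (j + 1)) := by
    intro j hj
    rcases eq_or_ne j i with rfl | hne
    · simpa [hξ1] using hz
    · rw [hξ1, Function.update_of_ne hne]
      exact hξ0v j hj
  have hS0 := hpart n t ξ0 ht0 htn htinc hξ0v hmesh
  have hS1 := hpart n t ξ1 ht0 htn htinc hξ1v hmesh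
  have hdiff : (∑ j ∈ Finset.range n, (t (j + 1) - t j) • g (ξ1 j))
      - (∑ j ∈ Finset.range n, (t (j + 1) - t j) • g (ξ0 j))
      = (t (i + 1) - t i) • (g z - g (t i)) := by
    rw [← Finset.sum_sub_distrib]
    rw [Finset.sum_eq_single i]
    · rw [smul_sub]
      congr 2
      · rw [hξ1, Function.update_self]
    · intro j _ hne
      rw [hξ1, Function.update_of_ne hne]
      simp
    · intro h
      exact absurd (Finset.mem_range.mpr hi) h
  have hlow : 3 < ‖(t (i + 1) - t i) • (g z - g (t i))‖ := by
    rw [norm_smul, Real.norm_eq_abs, htd i, abs_of_pos hΔ0]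
    have h1 : 3 / Δ < ‖g z - g (t i)‖ := by
      have h2 : ‖g z‖ - ‖g (t i)‖ ≤ ‖g z - g (t i)‖ :=
        le_trans (le_abs_self _) (abs_norm_sub_norm_le _ _)
      linarith
    calc (3:ℝ) = Δ * (3 / Δ) := by field_simp
      _ < Δ * ‖g z - g (t i)‖ := by exact mul_lt_mul_of_pos_left h1 hΔ0
  have hup : ‖(t (i + 1) - t i) • (g z - g (t i))‖ < 2 := by
    rw [← hdiff]
    calc ‖_ - _‖ = ‖(∑ j ∈ Finset.range n, (t (j + 1) - t j) • g (ξ1 j) - I)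
        - (∑ j ∈ Finset.range n, (t (j + 1) - t j) • g (ξ0 j) - I)‖ := by congr 1; abel
      _ ≤ _ + _ := norm_sub_le _ _
      _ < 1 + 1 := add_lt_add hS1 hS0
      _ = 2 := by norm_num
  linarith

lemma riemann_of_bounded {E : Type*} [NormedAddCommGroup E] [NormedSpace ℝ E]
    [CompleteSpace E]
    {g : ℝ → E} {a b M : ℝ} (hab : a < b)
    (hg : ∀ x ∈ Set.Ico a b, ∃ L : E,
      Filter.Tendsto g (nhdsWithin x (Set.Ioi x)) (nhds L))
    (hM : ∀ t ∈ Set.Icc a b, ‖g t‖ ≤ M) :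
    ∀ ε > (0:ℝ), ∃ δ > (0:ℝ), ∀ m : ℕ, ∀ t ξ : ℕ → ℝ,
      t 0 = a → t m = b → (∀ i < m, t i < t (i + 1)) →
      (∀ i < m, ξ i ∈ Set.Icc (t i) (t (i + 1))) →
      (∀ i < m, t (i + 1) - t i < δ) →
      ‖(∑ i ∈ Finset.range m, (t (i + 1) - t i) • g (ξ i)) - ∫ x in a..b, g x‖ < ε := by
  classical
  intro ε hε
  have hM0 : 0 ≤ M := le_trans (norm_nonneg _) (hM a ⟨le_refl _, hab.le⟩)
  set ε' : ℝ := ε / (b - a + 2 * M + 1) with hε'def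
  have hc0 : (0:ℝ) < b - a + 2 * M + 1 := by linarith
  have hε'0 : 0 < ε' := div_pos hε hc0
  have hDc : (BadSet g a b ε').Countable := badSet_countable hg hε'0
  have hD0 : volume (BadSet g a b ε') < ENNReal.ofReal ε' := by
    rw [hDc.measure_zero]
    exact ENNReal.ofReal_pos.mpr hε'0
  obtain ⟨U, hDU, hUopen, hUvol⟩ := Set.exists_isOpen_lt_of_lt _ _ hD0
  set K : Set ℝ := Set.Icc a b \ U with hKdef
  have hKcomp : IsCompact K := isCompact_Icc.diff hUopen
  have hKr : ∀ x : K, ∃ r > (0:ℝ), ∀ u ∈ Metric.ball (x:ℝ) r ∩ Set.Icc a b,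
      ∀ v ∈ Metric.ball (x:ℝ) r ∩ Set.Icc a b, ‖g u - g v‖ ≤ ε' :=
    fun x => good_of_not_bad x.2.1 (fun hc => x.2.2 (hDU hc))
  choose r hr0 hgood using hKr
  obtain ⟨δ, hδ0, hleb⟩ := lebesgue_number_lemma_of_metric
    (c := fun x : K => Metric.ball (x:ℝ) (r x)) hKcomp (fun _ => isOpen_ball)
    (by
      intro y hy
      exact Set.mem_iUnion.mpr ⟨⟨y, hy⟩, Metric.mem_ball_self (x := y) (hr0 ⟨y, hy⟩)⟩)
  refine ⟨δ, hδ0, ?_⟩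
  intro m t ξ ht0 htm htinc hξ hmesh
  have hta : ∀ i ≤ m, a ≤ t i := fun i hi => ht0 ▸ part_mono htinc 0 i (Nat.zero_le i) hi
  have htb : ∀ i ≤ m, t i ≤ b := fun i hi => htm ▸ part_mono htinc i m hi (le_refl m)
  have hpsub : ∀ i < m, Set.Icc (t i) (t (i + 1)) ⊆ Set.Icc a b := fun i hi =>
    Set.Icc_subset_Icc (hta i (le_of_lt hi)) (htb (i + 1) hi)
  have hgint : IntervalIntegrable g volume a b := intervalIntegrable_of_bounded hab.le hg hM
  have hpieceint : ∀ k < m, IntervalIntegrable g volume (t k) (t (k + 1)) := by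
    intro k hk
    apply hgint.mono_set
    rw [Set.uIcc_of_le (le_of_lt (htinc k hk)), Set.uIcc_of_le hab.le]
    exact hpsub k hk
  have hsum : ∑ i ∈ Finset.range m, ∫ x in t i..t (i + 1), g x = ∫ x in a..b, g x := by
    have := intervalIntegral.sum_integral_adjacent_intervals hpieceint
    rwa [ht0, htm] at this
  have hkey : (∑ i ∈ Finset.range m, (t (i + 1) - t i) • g (ξ i)) - ∫ x in a..b, g x
      = ∑ i ∈ Finset.range m,
        ((t (i + 1) - t i) • g (ξ i) - ∫ x in t i..t (i + 1), g x) := by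
    rw [Finset.sum_sub_distrib, hsum]
  set P : ℕ → Prop := fun i => (Set.Icc (t i) (t (i + 1)) ∩ K).Nonempty with hPdef
  have hterm : ∀ i ∈ Finset.range m,
      ‖(t (i + 1) - t i) • g (ξ i) - ∫ x in t i..t (i + 1), g x‖
        ≤ (if P i then ε' else 2 * M) * (t (i + 1) - t i) := by
    intro i hi
    have hi' : i < m := Finset.mem_range.mp hi
    have hle : t i ≤ t (i + 1) := le_of_lt (htinc i hi')
    have habs : |t (i + 1) - t i| = t (i + 1) - t i := abs_of_nonneg (by linarith)
    have heq : (t (i + 1) - t i) • g (ξ i) - ∫ x in t i..t (i + 1), g x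
        = ∫ x in t i..t (i + 1), (g (ξ i) - g x) := by
      rw [intervalIntegral.integral_sub intervalIntegrable_const (hpieceint i hi'),
        intervalIntegral.integral_const]
    rw [heq]
    by_cases hPi : P i
    · rw [if_pos hPi]
      obtain ⟨k, hkI, hkK⟩ := hPi
      obtain ⟨x0, hx0⟩ := hleb k hkK
      have hin : ∀ z ∈ Set.Icc (t i) (t (i + 1)),
          z ∈ Metric.ball (x0:ℝ) (r x0) ∩ Set.Icc a b := by
        intro z hz
        refine ⟨hx0 ?_, hpsub i hi' hz⟩
        rw [Metric.mem_ball, Real.dist_eq]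
        have h1 : |z - k| ≤ t (i + 1) - t i :=
          abs_le.mpr ⟨by linarith [hz.1, hkI.2], by linarith [hz.2, hkI.1]⟩
        exact lt_of_le_of_lt h1 (hmesh i hi')
      calc ‖∫ x in t i..t (i + 1), (g (ξ i) - g x)‖
          ≤ ε' * |t (i + 1) - t i| := by
            apply intervalIntegral.norm_integral_le_of_norm_le_const
            intro x hx
            rw [Set.uIoc_of_le hle] at hx
            exact hgood x0 (ξ i) (hin (ξ i) (hξ i hi')) x (hin x (Set.Ioc_subset_Icc_self hx))
        _ = ε' * (t (i + 1) - t i) := by rw [habs]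
    · rw [if_neg hPi]
      calc ‖∫ x in t i..t (i + 1), (g (ξ i) - g x)‖
          ≤ (2 * M) * |t (i + 1) - t i| := by
            apply intervalIntegral.norm_integral_le_of_norm_le_const
            intro x hx
            rw [Set.uIoc_of_le hle] at hx
            have h1 : ‖g (ξ i)‖ ≤ M := hM _ (hpsub i hi' (hξ i hi'))
            have h2 : ‖g x‖ ≤ M := hM _ (hpsub i hi' (Set.Ioc_subset_Icc_self hx))
            calc ‖g (ξ i) - g x‖ ≤ ‖g (ξ i)‖ + ‖g x‖ := norm_sub_le _ _
              _ ≤ 2 * M := by linarith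
        _ = (2 * M) * (t (i + 1) - t i) := by rw [habs]
  set Bf : Finset ℕ := (Finset.range m).filter (fun i => ¬ P i) with hBfdef
  have hΔnn : ∀ i < m, (0:ℝ) ≤ t (i + 1) - t i := fun i hi => by
    linarith [htinc i hi]
  have hgoodsum : ∑ i ∈ (Finset.range m).filter (fun i => P i), ε' * (t (i + 1) - t i)
      ≤ ε' * (b - a) := by
    rw [← Finset.mul_sum]
    apply mul_le_mul_of_nonneg_left _ hε'0.le
    calc ∑ i ∈ (Finset.range m).filter (fun i => P i), (t (i + 1) - t i)
        ≤ ∑ i ∈ Finset.range m, (t (i + 1) - t i) := by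
          apply Finset.sum_le_sum_of_subset_of_nonneg (Finset.filter_subset _ _)
          intro i hi _
          exact hΔnn i (Finset.mem_range.mp hi)
      _ = b - a := by rw [Finset.sum_range_sub t m, ht0, htm]
  have hbadsum : ∑ i ∈ Bf, (t (i + 1) - t i) ≤ ε' := by
    have hsubU : ∀ i ∈ Bf, Set.Ioc (t i) (t (i + 1)) ⊆ U := by
      intro i hiB x hx
      have hi' : i < m := Finset.mem_range.mp (Finset.mem_filter.mp hiB).1
      have hnP : ¬ P i := (Finset.mem_filter.mp hiB).2
      by_contra hxU
      exact hnP ⟨x, Set.Ioc_subset_Icc_self hx, ⟨hpsub i hi' (Set.Ioc_subset_Icc_self hx), hxU⟩⟩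
    have hdisj : (↑Bf : Set ℕ).PairwiseDisjoint (fun i => Set.Ioc (t i) (t (i + 1))) := by
      intro i hiB j hjB hij
      have hi' : i < m := Finset.mem_range.mp (Finset.mem_filter.mp hiB).1
      have hj' : j < m := Finset.mem_range.mp (Finset.mem_filter.mp hjB).1
      simp only [Function.onFun]
      rw [Set.Ioc_disjoint_Ioc]
      rcases lt_or_gt_of_ne hij with h | h
      · have : t (i + 1) ≤ t j := part_mono htinc (i + 1) j h (le_of_lt hj')
        calc t (i+1) ⊓ t (j+1) ≤ t (i + 1) := min_le_left _ _
          _ ≤ t j := this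
          _ ≤ t i ⊔ t j := le_max_right _ _
      · have : t (j + 1) ≤ t i := part_mono htinc (j + 1) i h (le_of_lt hi')
        calc t (i+1) ⊓ t (j+1) ≤ t (j + 1) := min_le_right _ _
          _ ≤ t i := this
          _ ≤ t i ⊔ t j := le_max_left _ _
    have hvol : volume (⋃ i ∈ Bf, Set.Ioc (t i) (t (i + 1)))
        = ∑ i ∈ Bf, volume (Set.Ioc (t i) (t (i + 1))) :=
      measure_biUnion_finset hdisj (fun i _ => measurableSet_Ioc)
    have h1 : ENNReal.ofReal (∑ i ∈ Bf, (t (i + 1) - t i))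
        = volume (⋃ i ∈ Bf, Set.Ioc (t i) (t (i + 1))) := by
      rw [hvol, ENNReal.ofReal_sum_of_nonneg (fun i hi =>
        hΔnn i (Finset.mem_range.mp (Finset.mem_filter.mp hi).1))]
      congr 1
      ext i
      rw [Real.volume_Ioc]
    have h2 : ENNReal.ofReal (∑ i ∈ Bf, (t (i + 1) - t i)) ≤ ENNReal.ofReal ε' := by
      rw [h1]
      exact le_trans (measure_mono (Set.iUnion₂_subset hsubU)) hUvol.le
    exact (ENNReal.ofReal_le_ofReal_iff hε'0.le).mp h2
  have hfin : ‖(∑ i ∈ Finset.range m, (t (i + 1) - t i) • g (ξ i)) - ∫ x in a..b, g x‖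
      ≤ ε' * (b - a) + 2 * M * ε' := by
    rw [hkey]
    calc ‖∑ i ∈ Finset.range m,
          ((t (i + 1) - t i) • g (ξ i) - ∫ x in t i..t (i + 1), g x)‖
        ≤ ∑ i ∈ Finset.range m,
          ‖(t (i + 1) - t i) • g (ξ i) - ∫ x in t i..t (i + 1), g x‖ := norm_sum_le _ _
      _ ≤ ∑ i ∈ Finset.range m, (if P i then ε' else 2 * M) * (t (i + 1) - t i) :=
          Finset.sum_le_sum hterm
      _ = ∑ i ∈ Finset.range m,
          (if P i then ε' * (t (i + 1) - t i) else 2 * M * (t (i + 1) - t i)) := by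
          apply Finset.sum_congr rfl
          intro i _
          rw [ite_mul]
      _ = (∑ i ∈ (Finset.range m).filter (fun i => P i), ε' * (t (i + 1) - t i))
          + ∑ i ∈ Bf, 2 * M * (t (i + 1) - t i) := Finset.sum_ite _ _
      _ ≤ ε' * (b - a) + 2 * M * ε' := by
          apply add_le_add hgoodsum
          rw [← Finset.mul_sum]
          exact mul_le_mul_of_nonneg_left hbadsum (by linarith)
  have heq2 : ε' * (b - a + 2 * M + 1) = ε := by
    rw [hε'def]; field_simp
  calc ‖(∑ i ∈ Finset.range m, (t (i + 1) - t i) • g (ξ i)) - ∫ x in a..b, g x‖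
      ≤ ε' * (b - a) + 2 * M * ε' := hfin
    _ = ε' * (b - a + 2 * M) := by ring
    _ < ε' * (b - a + 2 * M + 1) := by
        apply mul_lt_mul_of_pos_left _ hε'0
        linarith
    _ = ε := heq2

/-- A right regulated mapping `g : [a,b] → E` is Riemann integrable if and only
if it is bounded. -/
theorem right_regulated_riemannIntegrable_iff_bounded {E : Type*}
    [NormedAddCommGroup E] [NormedSpace ℝ E] [CompleteSpace E]
    (a b : ℝ) (hab : a < b) (g : ℝ → E)
    (hg : ∀ x ∈ Set.Ico a b, ∃ L : E,
      Filter.Tendsto g (nhdsWithin x (Set.Ioi x)) (nhds L)) :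
    RiemannIntegrableOn g a b ↔ ∃ M : ℝ, ∀ t ∈ Set.Icc a b, ‖g t‖ ≤ M := by
  constructor
  · rintro ⟨I, hI⟩
    exact bounded_of_riemann hab hI
  · rintro ⟨M, hM⟩
    exact ⟨∫ x in a..b, g x, riemann_of_bounded hab hg hM⟩
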